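/- Let k and n be integers with 1 ≤ k < n. For every real x > 0 with x ≠ 1, the following identity holds: (k/(2n))·(x−1)(x^{k/n}+1)/(x^{k/n}−1) = (k/(2n))·[ x^{k/n} + 1 + Σ_{l=k}^{n−1} ( Σ_{j=0}^{k−1} x^{(j−l)/n} )^{−1} + Σ_{l=k}^{n−1} ( Σ_{j=0}^{k−1} x^{(j−l−k)/n} )^{−1} ]. -/
import Mathlib


/-- For integers `1 ≤ k < n` and real `x > 0`, `x ≠ 1`:
`(k/(2n))·(x−1)(x^{k/n}+1)/(x^{k/n}−1)
  = (k/(2n))·[x^{k/n} + 1 + Σ_{l=k}^{n−1} (Σ_{j=0}^{k−1} x^{(j−l)/n})⁻¹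
      + Σ_{l=k}^{n−1} (Σ_{j=0}^{k−1} x^{(j−l−k)/n})⁻¹]`,
where `x ^ r` denotes the real power of the positive real `x`. -/
theorem fKappa_rational_decomposition (k n : ℕ) (hk : 1 ≤ k) (hkn : k < n)
    (x : ℝ) (hx : 0 < x) (hx1 : x ≠ 1) :
    (k : ℝ) / (2 * n) * ((x - 1) * (x ^ ((k : ℝ) / n) + 1)) / (x ^ ((k : ℝ) / n) - 1) =
      (k : ℝ) / (2 * n) * (x ^ ((k : ℝ) / n) + 1 +
        (∑ l ∈ Finset.Ico k n, (∑ j ∈ Finset.range k, x ^ (((j : ℝ) - l) / n))⁻¹) +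
        (∑ l ∈ Finset.Ico k n, (∑ j ∈ Finset.range k, x ^ (((j : ℝ) - l - k) / n))⁻¹)) := by
  have hn : 0 < n := by omega
  have hn0 : (n : ℝ) ≠ 0 := Nat.cast_ne_zero.mpr hn.ne'
  set y := x ^ ((1 : ℝ) / n) with hy_def
  have hy : 0 < y := Real.rpow_pos_of_pos hx _
  have key : ∀ r : ℝ, x ^ (r / n) = y ^ r := by
    intro r
    rw [hy_def, show r / (n : ℝ) = (1 / n) * r by ring, Real.rpow_mul hx.le]
  have hxy : x = y ^ n := by
    have := key n
    rw [div_self hn0, Real.rpow_one, Real.rpow_natCast] at this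
    exact this
  have hy1 : y ≠ 1 := by
    intro h
    rw [h, one_pow] at hxy
    exact hx1 hxy
  have hy1' : y - 1 ≠ 0 := sub_ne_zero.mpr hy1
  have hyk1 : y ^ k - 1 ≠ 0 := by
    rcases hy1.lt_or_gt with h | h
    · exact sub_ne_zero.mpr (ne_of_lt (pow_lt_one₀ hy.le h (by omega)))
    · exact sub_ne_zero.mpr (ne_of_gt (one_lt_pow₀ h (by omega)))
  have hkey : x ^ ((k : ℝ) / n) = y ^ k := by rw [key, Real.rpow_natCast]
  have e1 : ∀ l j : ℕ, x ^ (((j : ℝ) - l) / n) = y ^ j / y ^ l := by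
    intro l j
    rw [key, Real.rpow_sub hy, Real.rpow_natCast, Real.rpow_natCast]
  have e2 : ∀ l j : ℕ, x ^ (((j : ℝ) - l - k) / n) = y ^ j / y ^ l / y ^ k := by
    intro l j
    rw [key, Real.rpow_sub hy, Real.rpow_sub hy, Real.rpow_natCast, Real.rpow_natCast,
      Real.rpow_natCast]
  have s1 : (∑ l ∈ Finset.Ico k n, (∑ j ∈ Finset.range k, x ^ (((j : ℝ) - l) / n))⁻¹)
      = (y ^ n - y ^ k) / (y - 1) * ((y - 1) / (y ^ k - 1)) := by
    have : ∀ l ∈ Finset.Ico k n, (∑ j ∈ Finset.range k, x ^ (((j : ℝ) - l) / n))⁻¹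
        = y ^ l * ((y - 1) / (y ^ k - 1)) := by
      intro l _
      simp only [e1]
      rw [← Finset.sum_div, geom_sum_eq hy1, div_div, inv_div]
      ring
    rw [Finset.sum_congr rfl this, ← Finset.sum_mul, geom_sum_Ico hy1 hkn.le]
  have s2 : (∑ l ∈ Finset.Ico k n, (∑ j ∈ Finset.range k, x ^ (((j : ℝ) - l - k) / n))⁻¹)
      = (y ^ n - y ^ k) / (y - 1) * (y ^ k * ((y - 1) / (y ^ k - 1))) := by
    have : ∀ l ∈ Finset.Ico k n, (∑ j ∈ Finset.range k, x ^ (((j : ℝ) - l - k) / n))⁻¹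
        = y ^ l * (y ^ k * ((y - 1) / (y ^ k - 1))) := by
      intro l _
      simp only [e2]
      rw [← Finset.sum_div, ← Finset.sum_div, geom_sum_eq hy1, div_div, div_div, inv_div]
      ring
    rw [Finset.sum_congr rfl this, ← Finset.sum_mul, geom_sum_Ico hy1 hkn.le]
  rw [hkey, s1, s2, hxy]
  field_simp
  ring
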